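/- Let G be a connected finite simple graph on n vertices, and let s, t be vertices of G. Let G' be the simple graph obtained from G by attaching two new paths of 2n new vertices each: new vertices p_1, …, p_{2n} with edges {s,p_1} and {p_i,p_{i+1}} for 1 ≤ i ≤ 2n−1, and new vertices q_1, …, q_{2n} with edges {t,q_1} and {q_i,q_{i+1}} for 1 ≤ i ≤ 2n−1. Then G' is connected and diam(G') = 4n + dist_G(s,t). -/
import Mathlib


/-- The eccentricity of a vertex `u` in a finite simple graph: the maximum of the
distances from `u` to the other vertices. -/
noncomputable def gecc {α : Type} [Fintype α] (H : SimpleGraph α) (u : α) : ℕ :=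
  Finset.univ.sup fun v => H.dist u v

/-- The diameter of a finite simple graph: the maximum distance between two vertices. -/
noncomputable def gdiam {α : Type} [Fintype α] (H : SimpleGraph α) : ℕ :=
  Finset.univ.sup fun p : α × α => H.dist p.1 p.2

/-- The graph `G'` obtained from `G` by attaching two new paths (chains) of `2n` new
vertices each: `p_1, …, p_{2n}` (the vertices `Sum.inr (Sum.inl i)`, `p_i` having index
`i - 1`) with edges `{s,p_1}` and `{p_i, p_{i+1}}`, and `q_1, …, q_{2n}` (the vertices
`Sum.inr (Sum.inr i)`) with edges `{t,q_1}` and `{q_i, q_{i+1}}`. -/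
def attachChains {V : Type} (G : SimpleGraph V) (s t : V) (n : ℕ) :
    SimpleGraph (V ⊕ (Fin (2 * n) ⊕ Fin (2 * n))) :=
  SimpleGraph.fromRel fun x y =>
    (∃ u v : V, G.Adj u v ∧ x = Sum.inl u ∧ y = Sum.inl v) ∨
    (∃ h : 0 < 2 * n, x = Sum.inl s ∧ y = Sum.inr (Sum.inl ⟨0, h⟩)) ∨
    (∃ i j : Fin (2 * n), (i : ℕ) + 1 = (j : ℕ) ∧
      x = Sum.inr (Sum.inl i) ∧ y = Sum.inr (Sum.inl j)) ∨
    (∃ h : 0 < 2 * n, x = Sum.inl t ∧ y = Sum.inr (Sum.inr ⟨0, h⟩)) ∨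
    (∃ i j : Fin (2 * n), (i : ℕ) + 1 = (j : ℕ) ∧
      x = Sum.inr (Sum.inr i) ∧ y = Sum.inr (Sum.inr j))

variable {V : Type} (G : SimpleGraph V) (s t : V) (n : ℕ)

lemma ac_adj_inl {u v : V} (h : G.Adj u v) :
    (attachChains G s t n).Adj (Sum.inl u) (Sum.inl v) :=
  (SimpleGraph.fromRel_adj _ _ _).mpr
    ⟨by simp [h.ne], Or.inl (Or.inl ⟨u, v, h, rfl, rfl⟩)⟩

lemma ac_adj_sp (h : 0 < 2 * n) :
    (attachChains G s t n).Adj (Sum.inl s) (Sum.inr (Sum.inl ⟨0, h⟩)) :=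
  (SimpleGraph.fromRel_adj _ _ _).mpr
    ⟨by simp, Or.inl (Or.inr (Or.inl ⟨h, rfl, rfl⟩))⟩

lemma ac_adj_pp {i j : Fin (2 * n)} (hij : (i : ℕ) + 1 = (j : ℕ)) :
    (attachChains G s t n).Adj (Sum.inr (Sum.inl i)) (Sum.inr (Sum.inl j)) :=
  (SimpleGraph.fromRel_adj _ _ _).mpr
    ⟨by simp only [ne_eq, Sum.inr.injEq, Sum.inl.injEq]; rintro rfl; omega,
     Or.inl (Or.inr (Or.inr (Or.inl ⟨i, j, hij, rfl, rfl⟩)))⟩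

lemma ac_adj_tq (h : 0 < 2 * n) :
    (attachChains G s t n).Adj (Sum.inl t) (Sum.inr (Sum.inr ⟨0, h⟩)) :=
  (SimpleGraph.fromRel_adj _ _ _).mpr
    ⟨by simp, Or.inl (Or.inr (Or.inr (Or.inr (Or.inl ⟨h, rfl, rfl⟩))))⟩

lemma ac_adj_qq {i j : Fin (2 * n)} (hij : (i : ℕ) + 1 = (j : ℕ)) :
    (attachChains G s t n).Adj (Sum.inr (Sum.inr i)) (Sum.inr (Sum.inr j)) :=
  (SimpleGraph.fromRel_adj _ _ _).mpr
    ⟨by simp only [ne_eq, Sum.inr.injEq]; rintro rfl; omega,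
     Or.inl (Or.inr (Or.inr (Or.inr (Or.inr ⟨i, j, hij, rfl, rfl⟩))))⟩

def pwalk : (i : ℕ) → (h : i < 2 * n) →
    (attachChains G s t n).Walk (Sum.inl s) (Sum.inr (Sum.inl ⟨i, h⟩))
  | 0, h => (ac_adj_sp G s t n h).toWalk
  | i + 1, h =>
    (pwalk i (Nat.lt_of_succ_lt h)).concat
      (ac_adj_pp G s t n (i := ⟨i, Nat.lt_of_succ_lt h⟩) (j := ⟨i + 1, h⟩) rfl)

lemma pwalk_length : ∀ (i : ℕ) (h : i < 2 * n), (pwalk G s t n i h).length = i + 1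
  | 0, h => by simp [pwalk]
  | i + 1, h => by
    simp [pwalk, SimpleGraph.Walk.length_concat, pwalk_length i (Nat.lt_of_succ_lt h)]

def qwalk : (i : ℕ) → (h : i < 2 * n) →
    (attachChains G s t n).Walk (Sum.inl t) (Sum.inr (Sum.inr ⟨i, h⟩))
  | 0, h => (ac_adj_tq G s t n h).toWalk
  | i + 1, h =>
    (qwalk i (Nat.lt_of_succ_lt h)).concat
      (ac_adj_qq G s t n (i := ⟨i, Nat.lt_of_succ_lt h⟩) (j := ⟨i + 1, h⟩) rfl)

lemma qwalk_length : ∀ (i : ℕ) (h : i < 2 * n), (qwalk G s t n i h).length = i + 1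
  | 0, h => by simp [qwalk]
  | i + 1, h => by
    simp [qwalk, SimpleGraph.Walk.length_concat, qwalk_length i (Nat.lt_of_succ_lt h)]

noncomputable def pot (x : V ⊕ (Fin (2 * n) ⊕ Fin (2 * n))) : ℤ :=
  match x with
  | Sum.inl u => 2 * (n : ℤ) + G.dist s u
  | Sum.inr (Sum.inl i) => 2 * (n : ℤ) - 1 - (i.val : ℤ)
  | Sum.inr (Sum.inr j) => 2 * (n : ℤ) + G.dist s t + 1 + (j.val : ℤ)

lemma pot_adj (hconn : G.Connected) {x y : V ⊕ (Fin (2 * n) ⊕ Fin (2 * n))}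
    (h : (attachChains G s t n).Adj x y) :
    |pot G s t n x - pot G s t n y| ≤ 1 := by
  have key : ∀ a b : V ⊕ (Fin (2 * n) ⊕ Fin (2 * n)),
      ((∃ u v : V, G.Adj u v ∧ a = Sum.inl u ∧ b = Sum.inl v) ∨
       (∃ h : 0 < 2 * n, a = Sum.inl s ∧ b = Sum.inr (Sum.inl ⟨0, h⟩)) ∨
       (∃ i j : Fin (2 * n), (i : ℕ) + 1 = (j : ℕ) ∧
         a = Sum.inr (Sum.inl i) ∧ b = Sum.inr (Sum.inl j)) ∨
       (∃ h : 0 < 2 * n, a = Sum.inl t ∧ b = Sum.inr (Sum.inr ⟨0, h⟩)) ∨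
       (∃ i j : Fin (2 * n), (i : ℕ) + 1 = (j : ℕ) ∧
         a = Sum.inr (Sum.inr i) ∧ b = Sum.inr (Sum.inr j))) →
      |pot G s t n a - pot G s t n b| ≤ 1 := by
    rintro a b (⟨u, v, huv, rfl, rfl⟩ | ⟨h0, rfl, rfl⟩ | ⟨i, j, hij, rfl, rfl⟩ |
      ⟨h0, rfl, rfl⟩ | ⟨i, j, hij, rfl, rfl⟩)
    · have h1 : G.dist s u ≤ G.dist s v + 1 := by
        have := hconn.dist_triangle (u := s) (v := v) (w := u)
        have h2 : G.dist v u = 1 := SimpleGraph.dist_eq_one_iff_adj.mpr huv.symm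
        omega
      have h2 : G.dist s v ≤ G.dist s u + 1 := by
        have := hconn.dist_triangle (u := s) (v := u) (w := v)
        have h2 : G.dist u v = 1 := SimpleGraph.dist_eq_one_iff_adj.mpr huv
        omega
      simp only [pot]
      rw [abs_le]
      omega
    · simp only [pot, SimpleGraph.dist_self]
      rw [abs_le]
      constructor <;> simp
    · simp only [pot]
      rw [abs_le]
      omega
    · simp only [pot]
      rw [abs_le]
      constructor <;> simp
    · simp only [pot]
      rw [abs_le]
      omega
  rw [attachChains, SimpleGraph.fromRel_adj] at h
  rcases h.2 with h | h
  · exact key _ _ h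
  · rw [abs_sub_comm]; exact key _ _ h

lemma pot_walk (hconn : G.Connected) {x y : V ⊕ (Fin (2 * n) ⊕ Fin (2 * n))}
    (w : (attachChains G s t n).Walk x y) :
    |pot G s t n x - pot G s t n y| ≤ (w.length : ℤ) := by
  induction w with
  | nil => simp
  | cons h w ih =>
    rename_i a b c
    calc |pot G s t n a - pot G s t n c|
        ≤ |pot G s t n a - pot G s t n b| + |pot G s t n b - pot G s t n c| :=
          abs_sub_le _ _ _
      _ ≤ 1 + (w.length : ℤ) := add_le_add (pot_adj G s t n hconn h) ih
      _ ≤ ((SimpleGraph.Walk.cons h w).length : ℤ) := by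
          simp [SimpleGraph.Walk.length_cons]; omega

theorem stmt_5 {V : Type} [Fintype V] (n : ℕ) (hcard : Fintype.card V = n)
    (G : SimpleGraph V) (hconn : G.Connected) (s t : V) :
    (attachChains G s t n).Connected ∧
      gdiam (attachChains G s t n) = 4 * n + G.dist s t := by
  have hn : 0 < n := hcard ▸ (@Fintype.card_pos V _ hconn.nonempty)
  have h2n : 0 < 2 * n := by omega
  set G' := attachChains G s t n with hG'
  have hdlt : ∀ u v : V, G.dist u v < n := fun u v => by
    obtain ⟨p, hp, hlen⟩ := hconn.exists_path_of_dist u v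
    calc G.dist u v = p.length := hlen.symm
      _ < Fintype.card V := hp.length_lt
      _ = n := hcard
  let f : G →g G' := ⟨Sum.inl, fun h => ac_adj_inl G s t n h⟩
  have hinl : ∀ u v : V, G'.dist (Sum.inl u) (Sum.inl v) ≤ G.dist u v := fun u v => by
    obtain ⟨p, hp⟩ := hconn.exists_walk_length_eq_dist u v
    calc G'.dist (Sum.inl u) (Sum.inl v) ≤ (p.map f).length := SimpleGraph.dist_le _
      _ = p.length := SimpleGraph.Walk.length_map _ _
      _ = G.dist u v := hp
  have hp_dist : ∀ i : Fin (2 * n), G'.dist (Sum.inl s) (Sum.inr (Sum.inl i)) ≤ i.val + 1 :=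
    fun i => by
      have h := SimpleGraph.dist_le (pwalk G s t n i.val i.isLt)
      rw [pwalk_length] at h
      exact h
  have hq_dist : ∀ i : Fin (2 * n), G'.dist (Sum.inl t) (Sum.inr (Sum.inr i)) ≤ i.val + 1 :=
    fun i => by
      have h := SimpleGraph.dist_le (qwalk G s t n i.val i.isLt)
      rw [qwalk_length] at h
      exact h
  have hreach : ∀ x, G'.Reachable x (Sum.inl s) := by
    rintro (u | i | j)
    · exact SimpleGraph.Reachable.map f (hconn u s)
    · exact (pwalk G s t n i.val i.isLt).reverse.reachable
    · exact (qwalk G s t n j.val j.isLt).reverse.reachable.trans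
        (SimpleGraph.Reachable.map f (hconn t s))
  have hconn' : G'.Connected := by
    rw [SimpleGraph.connected_iff]
    exact ⟨fun x y => (hreach x).trans (hreach y).symm, ⟨Sum.inl s⟩⟩
  refine ⟨hconn', le_antisymm ?_ ?_⟩
  · rw [gdiam]
    apply Finset.sup_le
    rintro ⟨x, y⟩ -
    dsimp only
    have hst := hdlt s t
    rcases x with u | i | i <;> rcases y with v | j | j
    · have := hinl u v; have := hdlt u v; omega
    · have h1 := hconn'.dist_triangle (u := Sum.inl u) (v := Sum.inl s)
        (w := Sum.inr (Sum.inl j))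
      have h2 := hinl u s; have h3 := hdlt u s; have h4 := hp_dist j
      have h5 := j.isLt; omega
    · have h1 := hconn'.dist_triangle (u := Sum.inl u) (v := Sum.inl t)
        (w := Sum.inr (Sum.inr j))
      have h2 := hinl u t; have h3 := hdlt u t; have h4 := hq_dist j
      have h5 := j.isLt; omega
    · have h1 := hconn'.dist_triangle (u := Sum.inr (Sum.inl i)) (v := Sum.inl s)
        (w := Sum.inl v)
      have hc : G'.dist (Sum.inr (Sum.inl i)) (Sum.inl s)
          = G'.dist (Sum.inl s) (Sum.inr (Sum.inl i)) := SimpleGraph.dist_comm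
      have h2 := hinl s v; have h3 := hdlt s v; have h4 := hp_dist i
      have h5 := i.isLt; omega
    · have h1 := hconn'.dist_triangle (u := Sum.inr (Sum.inl i)) (v := Sum.inl s)
        (w := Sum.inr (Sum.inl j))
      have hc : G'.dist (Sum.inr (Sum.inl i)) (Sum.inl s)
          = G'.dist (Sum.inl s) (Sum.inr (Sum.inl i)) := SimpleGraph.dist_comm
      have h4 := hp_dist i; have h5 := hp_dist j
      have h6 := i.isLt; have h7 := j.isLt; omega
    · have h1 := hconn'.dist_triangle (u := Sum.inr (Sum.inl i)) (v := Sum.inl s)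
        (w := Sum.inr (Sum.inr j))
      have h2 := hconn'.dist_triangle (u := Sum.inl s) (v := Sum.inl t)
        (w := Sum.inr (Sum.inr j))
      have hc : G'.dist (Sum.inr (Sum.inl i)) (Sum.inl s)
          = G'.dist (Sum.inl s) (Sum.inr (Sum.inl i)) := SimpleGraph.dist_comm
      have h3 := hinl s t; have h4 := hp_dist i; have h5 := hq_dist j
      have h6 := i.isLt; have h7 := j.isLt; omega
    · have h1 := hconn'.dist_triangle (u := Sum.inr (Sum.inr i)) (v := Sum.inl t)
        (w := Sum.inl v)
      have hc : G'.dist (Sum.inr (Sum.inr i)) (Sum.inl t)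
          = G'.dist (Sum.inl t) (Sum.inr (Sum.inr i)) := SimpleGraph.dist_comm
      have h2 := hinl t v; have h3 := hdlt t v; have h4 := hq_dist i
      have h5 := i.isLt; omega
    · have h1 := hconn'.dist_triangle (u := Sum.inr (Sum.inr i)) (v := Sum.inl t)
        (w := Sum.inr (Sum.inl j))
      have h2 := hconn'.dist_triangle (u := Sum.inl t) (v := Sum.inl s)
        (w := Sum.inr (Sum.inl j))
      have hc : G'.dist (Sum.inr (Sum.inr i)) (Sum.inl t)
          = G'.dist (Sum.inl t) (Sum.inr (Sum.inr i)) := SimpleGraph.dist_comm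
      have hc2 : G.dist t s = G.dist s t := SimpleGraph.dist_comm
      have h3 := hinl t s; have h4 := hq_dist i; have h5 := hp_dist j
      have h6 := i.isLt; have h7 := j.isLt; omega
    · have h1 := hconn'.dist_triangle (u := Sum.inr (Sum.inr i)) (v := Sum.inl t)
        (w := Sum.inr (Sum.inr j))
      have hc : G'.dist (Sum.inr (Sum.inr i)) (Sum.inl t)
          = G'.dist (Sum.inl t) (Sum.inr (Sum.inr i)) := SimpleGraph.dist_comm
      have h4 := hq_dist i; have h5 := hq_dist j
      have h6 := i.isLt; have h7 := j.isLt; omega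
  · have hm : 2 * n - 1 < 2 * n := by omega
    have hlow : 4 * n + G.dist s t ≤
        G'.dist (Sum.inr (Sum.inl ⟨2 * n - 1, hm⟩)) (Sum.inr (Sum.inr ⟨2 * n - 1, hm⟩)) := by
      obtain ⟨p, hp⟩ := hconn'.exists_walk_length_eq_dist
        (Sum.inr (Sum.inl ⟨2 * n - 1, hm⟩)) (Sum.inr (Sum.inr ⟨2 * n - 1, hm⟩))
      have h := pot_walk G s t n hconn p
      rw [hp] at h
      simp only [pot] at h
      rw [abs_le] at h
      omega
    calc 4 * n + G.dist s t ≤ _ := hlow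
      _ ≤ gdiam G' := Finset.le_sup (f := fun p : _ × _ => G'.dist p.1 p.2)
          (Finset.mem_univ (Sum.inr (Sum.inl ⟨2 * n - 1, hm⟩), Sum.inr (Sum.inr ⟨2 * n - 1, hm⟩)))
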